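/- If a convex subset C of the unit sphere Sⁿ⁻¹ contains, together with each of its points, the antipodal point, then C is a totally geodesic subsphere, i.e. the intersection of Sⁿ⁻¹ with a linear subspace of Rⁿ. -/

import Mathlib

open scoped RealInnerProductSpace
open Real Set

/-- Spherical (angular) distance between unit vectors. -/
noncomputable def sphDist {n : ℕ} (u v : EuclideanSpace ℝ (Fin n)) : ℝ :=
  Real.arccos ⟪u, v⟫

/-- `w` lies on the (unique) minimizing great-circle arc from `u` to `v`
(for unit vectors `u, v` with `0 < sphDist u v < π`). -/
def OnMinArc {n : ℕ} (u v w : EuclideanSpace ℝ (Fin n)) : Prop :=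
  ∃ θ ∈ Set.Icc (0 : ℝ) (sphDist u v),
    w = (Real.sin (sphDist u v - θ) / Real.sin (sphDist u v)) • u +
        (Real.sin θ / Real.sin (sphDist u v)) • v

/-- Any unit vector which is a positive combination of `u` and `v` lies on the
minimizing arc from `u` to `v`. -/
lemma onMinArc_of_pos_comb {n : ℕ} {u v : EuclideanSpace ℝ (Fin n)}
    (hu : ‖u‖ = 1) (hv : ‖v‖ = 1) (hc1 : ⟪u, v⟫ < 1) (hc2 : -1 < ⟪u, v⟫)
    {α β : ℝ} (hα : 0 < α) (hβ : 0 < β)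
    (hw : ‖α • u + β • v‖ = 1) :
    OnMinArc u v (α • u + β • v) := by
  set c : ℝ := ⟪u, v⟫ with hc
  have hs2 : (0:ℝ) < 1 - c ^ 2 := by nlinarith
  set s : ℝ := Real.sqrt (1 - c ^ 2) with hsdef
  have hs : 0 < s := Real.sqrt_pos.mpr hs2
  have hss : s ^ 2 = 1 - c ^ 2 := Real.sq_sqrt hs2.le
  -- the norm identity
  have key : α ^ 2 + 2 * α * β * c + β ^ 2 = 1 := by
    have h1 : ⟪α • u + β • v, α • u + β • v⟫ = (1:ℝ) := by
      rw [real_inner_self_eq_norm_sq, hw]; norm_num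
    have h2 : ⟪α • u + β • v, α • u + β • v⟫ =
        α * α * ⟪u, u⟫ + α * β * c + β * α * ⟪v, u⟫ + β * β * ⟪v, v⟫ := by
      simp only [inner_add_add_self, inner_add_left, inner_add_right,
        real_inner_smul_left, real_inner_smul_right]
      ring
    have huu : ⟪u, u⟫ = (1:ℝ) := by rw [real_inner_self_eq_norm_sq, hu]; norm_num
    have hvv : ⟪v, v⟫ = (1:ℝ) := by rw [real_inner_self_eq_norm_sq, hv]; norm_num
    have hvu : ⟪v, u⟫ = c := (real_inner_comm v u).symm
    rw [h2, huu, hvv, hvu] at h1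
    nlinarith [h1]
  set x : ℝ := α + β * c with hx
  have hx2 : x ^ 2 = 1 - β ^ 2 * s ^ 2 := by rw [hx, hss]; nlinarith [key]
  have hx1 : x ≤ 1 := by nlinarith [hx2, sq_nonneg (β * s), sq_nonneg (x - 1)]
  have hxm1 : -1 ≤ x := by nlinarith [hx2, sq_nonneg (β * s), sq_nonneg (x + 1)]
  have hd : sphDist u v = Real.arccos c := rfl
  have hcosd : Real.cos (sphDist u v) = c := by
    rw [hd]; exact Real.cos_arccos (by linarith) (by linarith)
  have hsind : Real.sin (sphDist u v) = s := by
    rw [hd, Real.sin_arccos]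
  have hd0 : 0 < sphDist u v := by
    rw [hd]; exact Real.arccos_pos.mpr hc1
  have hdpi : sphDist u v < π := by
    rw [hd]
    refine lt_of_le_of_ne (Real.arccos_le_pi c) ?_
    intro h
    exact absurd (Real.arccos_eq_pi.mp h) (by linarith)
  refine ⟨Real.arccos x, ⟨Real.arccos_nonneg x, ?_⟩, ?_⟩
  · -- arccos x ≤ sphDist u v
    have hsinθ : Real.sin (Real.arccos x) = β * s := by
      rw [Real.sin_arccos, hx2]
      rw [show β ^ 2 * s ^ 2 = (β * s) ^ 2 by ring, sub_sub_cancel]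
      exact Real.sqrt_sq (by positivity)
    have hcosθ : Real.cos (Real.arccos x) = x := Real.cos_arccos hxm1 hx1
    have hsin_sub : Real.sin (sphDist u v - Real.arccos x) = α * s := by
      rw [Real.sin_sub, hsind, hcosd, hsinθ, hcosθ, hx]; ring
    by_contra h
    push_neg at h
    have h1 : sphDist u v - Real.arccos x ≤ 0 := by linarith
    have h2 : -π ≤ sphDist u v - Real.arccos x := by
      have := Real.arccos_le_pi x; linarith
    have := Real.sin_nonpos_of_nonpos_of_neg_pi_le h1 h2
    rw [hsin_sub] at this
    nlinarith
  · have hsinθ : Real.sin (Real.arccos x) = β * s := by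
      rw [Real.sin_arccos, hx2]
      rw [show β ^ 2 * s ^ 2 = (β * s) ^ 2 by ring, sub_sub_cancel]
      exact Real.sqrt_sq (by positivity)
    have hcosθ : Real.cos (Real.arccos x) = x := Real.cos_arccos hxm1 hx1
    have hsin_sub : Real.sin (sphDist u v - Real.arccos x) = α * s := by
      rw [Real.sin_sub, hsind, hcosd, hsinθ, hcosθ, hx]; ring
    rw [hsin_sub, hsinθ, hsind]
    rw [mul_div_assoc, mul_div_assoc, div_self hs.ne', mul_one, mul_one]

/-- If a convex subset `C` of the unit sphere `Sⁿ⁻¹` contains, together with each of its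
points, the antipodal point, then `C` is a totally geodesic subsphere, i.e. the
intersection of `Sⁿ⁻¹` with a linear subspace of `ℝⁿ`. -/
theorem convex_symmetric_subset_of_sphere_is_subsphere {n : ℕ}
    (C : Set (EuclideanSpace ℝ (Fin n)))
    (hunit : ∀ v ∈ C, ‖v‖ = 1)
    (hconv : ∀ u ∈ C, ∀ v ∈ C, 0 < sphDist u v → sphDist u v < π →
      ∀ w, OnMinArc u v w → w ∈ C)
    (hant : ∀ v ∈ C, -v ∈ C) :
    ∃ W : Submodule ℝ (EuclideanSpace ℝ (Fin n)),
      C = {v : EuclideanSpace ℝ (Fin n) | ‖v‖ = 1 ∧ v ∈ W} := by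
  classical
  set S : Set (EuclideanSpace ℝ (Fin n)) :=
    {x | x = 0 ∨ ∃ v ∈ C, ∃ t : ℝ, x = t • v} with hS
  -- normalization: nonzero elements are positive multiples of elements of C
  have hpos : ∀ (a : ℝ) (u : EuclideanSpace ℝ (Fin n)), u ∈ C → a ≠ 0 →
      ∃ (b : ℝ) (w : EuclideanSpace ℝ (Fin n)), w ∈ C ∧ 0 < b ∧ a • u = b • w := by
    intro a u hu ha
    rcases lt_or_gt_of_ne ha with h | h
    · exact ⟨-a, -u, hant u hu, by linarith, by simp⟩
    · exact ⟨a, u, hu, h, rfl⟩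
  have hadd : ∀ x ∈ S, ∀ y ∈ S, x + y ∈ S := by
    intro x hx y hy
    rcases hx with rfl | ⟨u, hu, a, rfl⟩
    · simpa using hy
    rcases hy with rfl | ⟨v, hv, b, rfl⟩
    · simpa [hS] using Or.inr ⟨u, hu, a, rfl⟩
    rcases eq_or_ne a 0 with rfl | ha
    · simpa [hS] using Or.inr ⟨v, hv, b, rfl⟩
    rcases eq_or_ne b 0 with rfl | hb
    · simpa [hS] using Or.inr ⟨u, hu, a, rfl⟩
    obtain ⟨a', u', hu', ha', hau⟩ := hpos a u hu ha
    obtain ⟨b', v', hv', hb', hbv⟩ := hpos b v hv hb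
    rw [hau, hbv]
    clear hau hbv ha hb hu hv
    have hu1 : ‖u'‖ = 1 := hunit u' hu'
    have hv1 : ‖v'‖ = 1 := hunit v' hv'
    set c : ℝ := ⟪u', v'⟫ with hc
    have habs : |c| ≤ 1 := by
      have := abs_real_inner_le_norm u' v'
      rw [hu1, hv1, mul_one] at this
      rw [hc]; exact this
    rcases eq_or_lt_of_le (abs_le.mp habs).2 with hc1 | hc1
    · -- c = 1 : u' = v'
      have : u' = v' := (inner_eq_one_iff_of_norm_eq_one hu1 hv1).mp hc1
      subst this
      exact Or.inr ⟨u', hu', a' + b', by rw [add_smul]⟩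
    rcases eq_or_lt_of_le (abs_le.mp habs).1 with hc2 | hc2
    · -- c = -1 : v' = -u'
      have hneg : ⟪u', -v'⟫ = (1:ℝ) := by
        rw [inner_neg_right, ← hc]; linarith
      have : u' = -v' := (inner_eq_one_iff_of_norm_eq_one hu1 (by simpa using hv1)).mp hneg
      rw [this]
      refine Or.inr ⟨-v', hant v' hv', a' - b', ?_⟩
      rw [sub_smul]; simp [smul_neg]
    -- generic case: -1 < c < 1
    set z : EuclideanSpace ℝ (Fin n) := a' • u' + b' • v' with hz
    have hz2 : ‖z‖ ^ 2 = a' ^ 2 + 2 * a' * b' * c + b' ^ 2 := by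
      rw [← real_inner_self_eq_norm_sq]
      have h2 : ⟪z, z⟫ =
          a' * a' * ⟪u', u'⟫ + a' * b' * c + b' * a' * ⟪v', u'⟫ + b' * b' * ⟪v', v'⟫ := by
        simp only [hz, inner_add_add_self, inner_add_left, inner_add_right,
          real_inner_smul_left, real_inner_smul_right]
        ring
      have huu : ⟪u', u'⟫ = (1:ℝ) := by rw [real_inner_self_eq_norm_sq, hu1]; norm_num
      have hvv : ⟪v', v'⟫ = (1:ℝ) := by rw [real_inner_self_eq_norm_sq, hv1]; norm_num
      have hvu : ⟪v', u'⟫ = c := (real_inner_comm v' u').symm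
      rw [h2, huu, hvv, hvu]; ring
    have hzpos : 0 < ‖z‖ := by
      have h1 : 0 < ‖z‖ ^ 2 := by
        rw [hz2]; nlinarith [mul_pos ha' hb', sq_nonneg (a' - b')]
      nlinarith [norm_nonneg z, h1]
    set r : ℝ := ‖z‖ with hr
    have hw1 : ‖r⁻¹ • z‖ = 1 := by
      rw [norm_smul, norm_inv, Real.norm_eq_abs, abs_of_pos hzpos]
      field_simp
      exact hr.symm
    have hcomb : r⁻¹ • z = (a' / r) • u' + (b' / r) • v' := by
      rw [hz, smul_add, smul_smul, smul_smul]
      rw [div_eq_inv_mul, div_eq_inv_mul]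
    have harc : OnMinArc u' v' ((a' / r) • u' + (b' / r) • v') := by
      refine onMinArc_of_pos_comb hu1 hv1 hc1 hc2 ?_ ?_ ?_
      · positivity
      · positivity
      · rw [← hcomb]; exact hw1
    have hd0 : 0 < sphDist u' v' := Real.arccos_pos.mpr hc1
    have hdpi : sphDist u' v' < π := by
      refine lt_of_le_of_ne (Real.arccos_le_pi c) ?_
      intro h
      exact absurd (Real.arccos_eq_pi.mp h) (by linarith)
    have hwC : (a' / r) • u' + (b' / r) • v' ∈ C :=
      hconv u' hu' v' hv' hd0 hdpi _ harc
    refine Or.inr ⟨_, hwC, r, ?_⟩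
    rw [smul_add, smul_smul, smul_smul]
    rw [mul_div_cancel₀ _ hzpos.ne', mul_div_cancel₀ _ hzpos.ne']
  refine ⟨{ carrier := S
            zero_mem' := Or.inl rfl
            add_mem' := fun hx hy => hadd _ hx _ hy
            smul_mem' := by
              rintro t x (rfl | ⟨v, hv, s, rfl⟩)
              · simp only [smul_zero]; exact Or.inl rfl
              · exact Or.inr ⟨v, hv, t * s, smul_smul t s v⟩ }, ?_⟩
  ext v
  constructor
  · intro hv
    exact ⟨hunit v hv, Or.inr ⟨v, hv, 1, (one_smul ℝ v).symm⟩⟩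
  · rintro ⟨hn, rfl | ⟨u, hu, t, rfl⟩⟩
    · simp at hn
    · have hu1 : ‖u‖ = 1 := hunit u hu
      rw [norm_smul, hu1, mul_one, Real.norm_eq_abs] at hn
      rcases abs_eq (by norm_num : (0:ℝ) ≤ 1) |>.mp hn with rfl | rfl
      · simpa using hu
      · simpa using hant u hu
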